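/- arXiv:1608.00904 — 6 statements merged into one kernel-verified Lean document; each statement's English description precedes it below -/
import Mathlib

section
/- If K_{p,p} is the complete bipartite graph with bipartition (X,Y), X = {x_1,...,x_p}, Y = {y_1,...,y_p}, then K_{p,p} has a proper edge-coloring β with colors in {1,...,p + ⌊p/2⌋} such that for every i with 1 ≤ i ≤ p, the set of colors on edges incident to x_i equals the interval [⌊i/2⌋+1, ⌊i/2⌋+p], and likewise for y_i. -/
open scoped Classical

/-- A proper edge-coloring: distinct edges sharing a vertex receive distinct colors. -/
def IsProperEdgeColoring {V : Type*} (G : SimpleGraph V) (c : Sym2 V → ℕ) : Prop :=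
  ∀ e ∈ G.edgeSet, ∀ e' ∈ G.edgeSet, e ≠ e' → (∃ v, v ∈ e ∧ v ∈ e') → c e ≠ c e'

/-- A proper `t`-edge-coloring: proper, colors lie in `{1,…,t}`, and all colors are used. -/
def IsProperTEdgeColoring {V : Type*} (G : SimpleGraph V) (t : ℕ) (c : Sym2 V → ℕ) : Prop :=
  IsProperEdgeColoring G c ∧ (∀ e ∈ G.edgeSet, c e ∈ Finset.Icc 1 t) ∧
    ∀ k ∈ Finset.Icc 1 t, ∃ e ∈ G.edgeSet, c e = k

/-- The vSpectrum of a vertex: the set of colors appearing on edges incident to `v`. -/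
noncomputable def vSpectrum {V : Type*} [Fintype V] (G : SimpleGraph V) (c : Sym2 V → ℕ)
    (v : V) : Finset ℕ :=
  (Finset.univ.filter (fun u => G.Adj v u)).image (fun u => c s(v, u))

/-- The deficiency of a finite set of naturals: `max S − min S − |S| + 1`. -/
def setDef (S : Finset ℕ) : ℕ := (S.max.getD 0 - S.min.getD 0) - (S.card - 1)

/-- The deficiency of a proper edge-coloring: the sum of vertex deficiencies. -/
noncomputable def colDef {V : Type*} [Fintype V] (G : SimpleGraph V) (c : Sym2 V → ℕ) : ℕ :=
  ∑ v, setDef (vSpectrum G c v)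

/-- The deficiency of a graph: the minimum deficiency over all proper edge-colorings. -/
noncomputable def graphDef {V : Type*} [Fintype V] (G : SimpleGraph V) : ℕ :=
  sInf {d | ∃ c, IsProperEdgeColoring G c ∧ colDef G c = d}

/-- `w_def G`: the least `t` such that some proper `t`-edge-coloring attains `def(G)`. -/
noncomputable def wdef {V : Type*} [Fintype V] (G : SimpleGraph V) : ℕ :=
  sInf {t | ∃ c, IsProperTEdgeColoring G t c ∧ colDef G c = graphDef G}

/-- `W_def G`: the greatest `t` such that some proper `t`-edge-coloring attains `def(G)`. -/
noncomputable def Wdef {V : Type*} [Fintype V] (G : SimpleGraph V) : ℕ :=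
  sSup {t | ∃ c, IsProperTEdgeColoring G t c ∧ colDef G c = graphDef G}

/-- A graph is interval colorable if some proper edge-coloring has deficiency `0`. -/
def IntervalColorable {V : Type*} [Fintype V] (G : SimpleGraph V) : Prop :=
  ∃ c, IsProperEdgeColoring G c ∧ colDef G c = 0

/-- `w G`: the least `t` such that `G` has an interval `t`-coloring. -/
noncomputable def wint {V : Type*} [Fintype V] (G : SimpleGraph V) : ℕ :=
  sInf {t | ∃ c, IsProperTEdgeColoring G t c ∧ colDef G c = 0}

/-- `W G`: the greatest `t` such that `G` has an interval `t`-coloring. -/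
noncomputable def Wint {V : Type*} [Fintype V] (G : SimpleGraph V) : ℕ :=
  sSup {t | ∃ c, IsProperTEdgeColoring G t c ∧ colDef G c = 0}


-- Auxiliary construction --

def basen (p n : ℕ) : ℕ :=
  if p % 2 = 1 then (n * ((p + 1) / 2)) % p
  else if n % 2 = 0 then (n % p) / 2 else p / 2 + (n % p) / 2

lemma mod_cases (a p : ℕ) (hp : 0 < p) (h : a < 2 * p) : a = a % p ∨ a = p + a % p := by
  rcases Nat.lt_or_ge a p with h1 | h1
  · left; rw [Nat.mod_eq_of_lt h1]
  · right
    have h2 : a % p = (a - p) % p := Nat.mod_eq_sub_mod h1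
    rw [h2, Nat.mod_eq_of_lt (by omega)]
    omega

lemma mod_eq_mod_cases (a b p : ℕ) (hp : 0 < p) (ha : a < 2 * p) (hb : b < 2 * p)
    (h : a % p = b % p) : a = b ∨ a = b + p ∨ b = a + p := by
  rcases mod_cases a p hp ha with h1 | h1 <;> rcases mod_cases b p hp hb with h2 | h2 <;> omega

lemma basen_lt (p n : ℕ) (hp : 0 < p) : basen p n < p := by
  unfold basen
  have h1 : n % p < p := Nat.mod_lt _ hp
  split
  · exact Nat.mod_lt _ hp
  · rename_i hpo
    have h2 : n % p % 2 = n % 2 := Nat.mod_mod_of_dvd n (by omega)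
    split <;> omega

lemma two_basen_odd (p n : ℕ) (hp : p % 2 = 1) : (2 * basen p n) % p = n % p := by
  unfold basen
  rw [if_pos hp]
  have h1 : 2 * (n * ((p + 1) / 2) % p) % p = 2 * (n * ((p + 1) / 2)) % p := by
    conv_rhs => rw [Nat.mul_mod]
    rw [Nat.mul_mod, Nat.mod_mod_of_dvd _ (dvd_refl p)]
  rw [h1]
  have h2 : 2 * (n * ((p + 1) / 2)) = n + n * p := by
    have : 2 * ((p + 1) / 2) = p + 1 := by omega
    calc 2 * (n * ((p + 1) / 2)) = n * (2 * ((p + 1) / 2)) := by ring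
      _ = n * (p + 1) := by rw [this]
      _ = n + n * p := by ring
  rw [h2, Nat.add_mul_mod_self_right]

lemma two_basen_even (p n : ℕ) (hp : p % 2 = 0) (hn : n % 2 = 0) : 2 * basen p n = n % p := by
  unfold basen
  rw [if_neg (by omega), if_pos hn]
  have h2 : n % p % 2 = n % 2 := Nat.mod_mod_of_dvd n (by omega)
  omega

lemma key (p i j : ℕ) (hi : i < p) (hj : j < p)
    (h : basen p (i + j) < (i + 1) / 2) : basen p (i + j) < (j + 1) / 2 := by
  have hp : 0 < p := by omega
  have hr := basen_lt p (i + j) hp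
  by_cases hpo : p % 2 = 1
  · have h2 := two_basen_odd p (i + j) hpo
    have h3 := mod_eq_mod_cases (2 * basen p (i + j)) (i + j) p hp (by omega) (by omega) h2
    omega
  · by_cases hne : (i + j) % 2 = 0
    · have h2 := two_basen_even p (i + j) (by omega) hne
      have h4 := mod_cases (i + j) p hp (by omega)
      rw [← h2] at h4
      omega
    · exfalso
      have hb : basen p (i + j) = p / 2 + ((i + j) % p) / 2 := by
        unfold basen; rw [if_neg hpo, if_neg hne]
      omega

lemma basen_inj' (p n n' : ℕ) (hp : 0 < p) (h : basen p n = basen p n') : n % p = n' % p := by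
  by_cases hpo : p % 2 = 1
  · have h1 := two_basen_odd p n hpo
    have h2 := two_basen_odd p n' hpo
    rw [h] at h1
    exact h1.symm.trans h2
  · have hpe : p % 2 = 0 := by omega
    have hmm : n % p % 2 = n % 2 := Nat.mod_mod_of_dvd n (by omega)
    have hmm' : n' % p % 2 = n' % 2 := Nat.mod_mod_of_dvd n' (by omega)
    have hlt : n % p < p := Nat.mod_lt _ hp
    have hlt' : n' % p < p := Nat.mod_lt _ hp
    set a := n % p with ha
    set a' := n' % p with ha'
    by_cases hn : n % 2 = 0 <;> by_cases hn' : n' % 2 = 0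
    · have e1 := two_basen_even p n hpe hn
      have e2 := two_basen_even p n' hpe hn'
      rw [← ha] at e1; rw [← ha'] at e2
      omega
    · have e1 : basen p n = a / 2 := by unfold basen; rw [if_neg hpo, if_pos hn, ← ha]
      have e2 : basen p n' = p / 2 + a' / 2 := by unfold basen; rw [if_neg hpo, if_neg hn', ← ha']
      omega
    · have e1 : basen p n = p / 2 + a / 2 := by unfold basen; rw [if_neg hpo, if_neg hn, ← ha]
      have e2 : basen p n' = a' / 2 := by unfold basen; rw [if_neg hpo, if_pos hn', ← ha']
      omega
    · have e1 : basen p n = p / 2 + a / 2 := by unfold basen; rw [if_neg hpo, if_neg hn, ← ha]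
      have e2 : basen p n' = p / 2 + a' / 2 := by unfold basen; rw [if_neg hpo, if_neg hn', ← ha']
      omega

lemma basen_inj (p i j j' : ℕ) (hi : i < p) (hj : j < p) (hj' : j' < p)
    (h : basen p (i + j) = basen p (i + j')) : j = j' := by
  have hp : 0 < p := by omega
  have h1 := basen_inj' p (i + j) (i + j') hp h
  have h2 := mod_eq_mod_cases (i + j) (i + j') p hp (by omega) (by omega) h1
  omega

def colf (p i j : ℕ) : ℕ :=
  basen p (i + j) + 1 +
    if basen p (i + j) < (i + 1) / 2 ∧ basen p (i + j) < (j + 1) / 2 then p else 0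

lemma colf_comm (p i j : ℕ) : colf p i j = colf p j i := by
  unfold colf
  rw [Nat.add_comm j i]
  congr 1
  exact if_congr and_comm rfl rfl

lemma colf_cond (p i j : ℕ) (hi : i < p) (hj : j < p) :
    colf p i j = basen p (i + j) + 1 +
      if basen p (i + j) < (i + 1) / 2 then p else 0 := by
  unfold colf
  congr 1
  apply if_congr _ rfl rfl
  exact ⟨And.left, fun h => ⟨h, key p i j hi hj h⟩⟩

lemma colf_mem (p i j : ℕ) (hi : i < p) (hj : j < p) :
    colf p i j ∈ Finset.Icc ((i + 1) / 2 + 1) ((i + 1) / 2 + p) := by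
  rw [colf_cond p i j hi hj, Finset.mem_Icc]
  have hr := basen_lt p (i + j) (by omega)
  split <;> omega

lemma colf_le (p i j : ℕ) (hi : i < p) (hj : j < p) :
    colf p i j ∈ Finset.Icc 1 (p + p / 2) := by
  have := colf_mem p i j hi hj
  rw [Finset.mem_Icc] at this ⊢
  omega

lemma colf_inj_right (p i j j' : ℕ) (hi : i < p) (hj : j < p) (hj' : j' < p)
    (h : colf p i j = colf p i j') : j = j' := by
  rw [colf_cond p i j hi hj, colf_cond p i j' hi hj'] at h
  have h1 := basen_lt p (i + j) (by omega)
  have h2 := basen_lt p (i + j') (by omega)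
  apply basen_inj p i j j' hi hj hj'
  by_cases c1 : basen p (i + j) < (i + 1) / 2 <;>
    by_cases c2 : basen p (i + j') < (i + 1) / 2 <;>
    simp [c1, c2] at h <;> omega

def gfun (p : ℕ) : (Fin p ⊕ Fin p) → (Fin p ⊕ Fin p) → ℕ
  | Sum.inl i, Sum.inr j => colf p i.val j.val
  | Sum.inr i, Sum.inl j => colf p j.val i.val
  | _, _ => 0

lemma gfun_symm (p : ℕ) : ∀ a b, gfun p a b = gfun p b a := by
  rintro (i | i) (j | j) <;> rfl

noncomputable def mycol (p : ℕ) : Sym2 (Fin p ⊕ Fin p) → ℕ :=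
  Sym2.lift ⟨gfun p, gfun_symm p⟩

lemma mycol_mk (p : ℕ) (i j : Fin p) : mycol p s(Sum.inl i, Sum.inr j) = colf p i.val j.val :=
  rfl

lemma edge_form (p : ℕ) (e : Sym2 (Fin p ⊕ Fin p))
    (he : e ∈ (completeBipartiteGraph (Fin p) (Fin p)).edgeSet) :
    ∃ i j : Fin p, e = s(Sum.inl i, Sum.inr j) := by
  induction e with
  | _ a b =>
    rw [SimpleGraph.mem_edgeSet] at he
    rcases a with i | i <;> rcases b with j | j <;> simp [completeBipartiteGraph] at he
    · exact ⟨i, j, rfl⟩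
    · exact ⟨j, i, Sym2.eq_swap⟩

lemma spec_inl (p : ℕ) (i : Fin p) :
    vSpectrum (completeBipartiteGraph (Fin p) (Fin p)) (mycol p) (Sum.inl i) =
      Finset.image (fun j : Fin p => colf p i.val j.val) Finset.univ := by
  unfold vSpectrum
  ext k
  simp only [Finset.mem_image, Finset.mem_filter, Finset.mem_univ, true_and]
  constructor
  · rintro ⟨u, hadj, hk⟩
    rcases u with u | u
    · simp [completeBipartiteGraph] at hadj
    · exact ⟨u, by rw [← mycol_mk]; exact hk⟩
  · rintro ⟨j, hj⟩
    exact ⟨Sum.inr j, by simp [completeBipartiteGraph], by rw [mycol_mk]; exact hj⟩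

lemma spec_inr (p : ℕ) (i : Fin p) :
    vSpectrum (completeBipartiteGraph (Fin p) (Fin p)) (mycol p) (Sum.inr i) =
      Finset.image (fun j : Fin p => colf p i.val j.val) Finset.univ := by
  unfold vSpectrum
  ext k
  simp only [Finset.mem_image, Finset.mem_filter, Finset.mem_univ, true_and]
  constructor
  · rintro ⟨u, hadj, hk⟩
    rcases u with u | u
    · refine ⟨u, ?_⟩
      rw [colf_comm, ← mycol_mk, ← hk]
      congr 1
      exact Sym2.eq_swap
    · simp [completeBipartiteGraph] at hadj
  · rintro ⟨j, hj⟩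
    refine ⟨Sum.inl j, by simp [completeBipartiteGraph], ?_⟩
    rw [Sym2.eq_swap, mycol_mk, colf_comm]
    exact hj

lemma image_colf (p : ℕ) (i : Fin p) :
    Finset.image (fun j : Fin p => colf p i.val j.val) Finset.univ =
      Finset.Icc ((i.val + 1) / 2 + 1) ((i.val + 1) / 2 + p) := by
  apply Finset.eq_of_subset_of_card_le
  · intro k hk
    simp only [Finset.mem_image, Finset.mem_univ, true_and] at hk
    obtain ⟨j, rfl⟩ := hk
    exact colf_mem p i.val j.val i.isLt j.isLt
  · rw [Nat.card_Icc]
    have hinj : Function.Injective (fun j : Fin p => colf p i.val j.val) := by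
      intro a b hab
      exact Fin.ext (colf_inj_right p i.val a.val b.val i.isLt a.isLt b.isLt hab)
    rw [Finset.card_image_of_injective _ hinj, Finset.card_univ, Fintype.card_fin]
    omega

lemma myproper (p : ℕ) :
    IsProperEdgeColoring (completeBipartiteGraph (Fin p) (Fin p)) (mycol p) := by
  intro e he e' he' hne hv
  obtain ⟨v, hv1, hv2⟩ := hv
  obtain ⟨i, j, rfl⟩ := edge_form p e he
  obtain ⟨i', j', rfl⟩ := edge_form p e' he'
  rw [Sym2.mem_iff] at hv1 hv2
  rw [mycol_mk, mycol_mk]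
  rcases hv1 with rfl | rfl
  · rcases hv2 with h2 | h2
    · injection h2 with h3
      subst h3
      have hjj : j ≠ j' := fun h => hne (by rw [h])
      intro hc
      exact hjj (Fin.ext (colf_inj_right p _ _ _ (Fin.is_lt _) (Fin.is_lt _) (Fin.is_lt _) hc))
    · exact absurd h2 (by simp)
  · rcases hv2 with h2 | h2
    · exact absurd h2 (by simp)
    · injection h2 with h3
      subst h3
      have hii : i ≠ i' := fun h => hne (by rw [h])
      intro hc
      rw [colf_comm p i.val, colf_comm p i'.val] at hc
      exact hii (Fin.ext (colf_inj_right p _ _ _ (Fin.is_lt _) (Fin.is_lt _) (Fin.is_lt _) hc))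

/-- a special interval coloring of `K_{p,p}`. -/
theorem stmt_0 (p : ℕ) :
    ∃ c : Sym2 (Fin p ⊕ Fin p) → ℕ,
      IsProperEdgeColoring (completeBipartiteGraph (Fin p) (Fin p)) c ∧
      (∀ e ∈ (completeBipartiteGraph (Fin p) (Fin p)).edgeSet,
        c e ∈ Finset.Icc 1 (p + p / 2)) ∧
      (∀ i : Fin p,
        vSpectrum (completeBipartiteGraph (Fin p) (Fin p)) c (Sum.inl i) =
          Finset.Icc ((i.val + 1) / 2 + 1) ((i.val + 1) / 2 + p) ∧
        vSpectrum (completeBipartiteGraph (Fin p) (Fin p)) c (Sum.inr i) =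
          Finset.Icc ((i.val + 1) / 2 + 1) ((i.val + 1) / 2 + p)) := by
  refine ⟨mycol p, myproper p, ?_, ?_⟩
  · intro e he
    obtain ⟨i, j, rfl⟩ := edge_form p e he
    rw [mycol_mk]
    exact colf_le p i.val j.val i.isLt j.isLt
  · intro i
    exact ⟨by rw [spec_inl, image_colf], by rw [spec_inr, image_colf]⟩
end

section
/- Let 𝔠 be a class of graphs closed under attaching pendant edges, and suppose every interval-colorable graph G' in 𝔠 satisfies W(G') ≤ f(|V(G')|) for a fixed function f. Then every graph G in 𝔠 satisfies W_def(G) ≤ f(|V(G)| + def(G)). -/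
open scoped Classical

/-- Attaching `k` pendant edges to `G`, the `i`-th pendant attached at `g i`. -/
def attachPendants {V : Type} (G : SimpleGraph V) (k : ℕ) (g : Fin k → V) :
    SimpleGraph (V ⊕ Fin k) :=
  SimpleGraph.fromRel (fun a b =>
    (∃ x y, a = Sum.inl x ∧ b = Sum.inl y ∧ G.Adj x y) ∨
    (∃ i, a = Sum.inl (g i) ∧ b = Sum.inr i))


section Aux

lemma max_getD_eq {S : Finset ℕ} (h : S.Nonempty) (d : ℕ) : S.max.getD d = S.max' h := by
  rw [← Finset.coe_max' h]; rfl

lemma min_getD_eq {S : Finset ℕ} (h : S.Nonempty) (d : ℕ) : S.min.getD d = S.min' h := by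
  rw [← Finset.coe_min' h]; rfl

lemma setDef_Icc {a b : ℕ} (h : a ≤ b) : setDef (Finset.Icc a b) = 0 := by
  have hne : (Finset.Icc a b).Nonempty := ⟨a, by simp [h]⟩
  have hmax : (Finset.Icc a b).max' hne = b :=
    le_antisymm (Finset.max'_le _ _ _ (fun x hx => (Finset.mem_Icc.1 hx).2))
      (Finset.le_max' _ _ (by simp [h]))
  have hmin : (Finset.Icc a b).min' hne = a :=
    le_antisymm (Finset.min'_le _ _ (by simp [h]))
      (Finset.le_min' _ _ _ (fun x hx => (Finset.mem_Icc.1 hx).1))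
  rw [setDef, max_getD_eq hne, min_getD_eq hne, hmax, hmin, Nat.card_Icc]
  omega

lemma setDef_singleton (m : ℕ) : setDef {m} = 0 := by
  rw [← Finset.Icc_self]; exact setDef_Icc le_rfl

lemma setDef_empty : setDef ∅ = 0 := rfl

lemma mem_vSpectrum_iff {V : Type*} [Fintype V] (G : SimpleGraph V) (c : Sym2 V → ℕ)
    (v : V) (m : ℕ) : m ∈ vSpectrum G c v ↔ ∃ u, G.Adj v u ∧ c s(v, u) = m := by
  simp [vSpectrum]

lemma attachPendants_adj {V : Type} (G : SimpleGraph V) (k : ℕ) (g : Fin k → V)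
    (a b : V ⊕ Fin k) : (attachPendants G k g).Adj a b ↔
    (∃ x y, a = Sum.inl x ∧ b = Sum.inl y ∧ G.Adj x y) ∨
    (∃ i, a = Sum.inl (g i) ∧ b = Sum.inr i) ∨
    (∃ i, b = Sum.inl (g i) ∧ a = Sum.inr i) := by
  simp only [attachPendants, SimpleGraph.fromRel_adj]
  constructor
  · rintro ⟨hne, h | h⟩
    · rcases h with ⟨x, y, rfl, rfl, hxy⟩ | ⟨i, rfl, rfl⟩
      · exact Or.inl ⟨x, y, rfl, rfl, hxy⟩
      · exact Or.inr (Or.inl ⟨i, rfl, rfl⟩)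
    · rcases h with ⟨x, y, rfl, rfl, hxy⟩ | ⟨i, rfl, rfl⟩
      · exact Or.inl ⟨y, x, rfl, rfl, hxy.symm⟩
      · exact Or.inr (Or.inr ⟨i, rfl, rfl⟩)
  · rintro (⟨x, y, rfl, rfl, hxy⟩ | ⟨i, rfl, rfl⟩ | ⟨i, rfl, rfl⟩)
    · exact ⟨by simpa using hxy.ne, Or.inl (Or.inl ⟨x, y, rfl, rfl, hxy⟩)⟩
    · exact ⟨by simp, Or.inl (Or.inr ⟨i, rfl, rfl⟩)⟩
    · exact ⟨by simp, Or.inr (Or.inr ⟨i, rfl, rfl⟩)⟩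

/-- The coloring on the pendant-augmented graph. -/
noncomputable def pendantColor {V : Type} (c : Sym2 V → ℕ) {d : ℕ} (k : Fin d → ℕ) :
    Sym2 (V ⊕ Fin d) → ℕ :=
  Sym2.lift ⟨fun a b => match a, b with
    | Sum.inl x, Sum.inl y => c s(x, y)
    | Sum.inl _, Sum.inr i => k i
    | Sum.inr i, Sum.inl _ => k i
    | Sum.inr _, Sum.inr _ => 0,
   by
    intro a b
    cases a with
    | inl x => cases b with
      | inl y => show c s(x, y) = c s(y, x); rw [Sym2.eq_swap]
      | inr j => rfl
    | inr i => cases b with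
      | inl y => rfl
      | inr j => rfl⟩

@[simp] lemma pendantColor_inl_inl {V : Type} (c : Sym2 V → ℕ) {d : ℕ} (k : Fin d → ℕ)
    (x y : V) : pendantColor c k s(Sum.inl x, Sum.inl y) = c s(x, y) := rfl

@[simp] lemma pendantColor_inl_inr {V : Type} (c : Sym2 V → ℕ) {d : ℕ} (k : Fin d → ℕ)
    (x : V) (i : Fin d) : pendantColor c k s(Sum.inl x, Sum.inr i) = k i := rfl

@[simp] lemma pendantColor_inr_inl {V : Type} (c : Sym2 V → ℕ) {d : ℕ} (k : Fin d → ℕ)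
    (x : V) (i : Fin d) : pendantColor c k s(Sum.inr i, Sum.inl x) = k i := rfl

lemma t_le_of_TColoring {V : Type*} [Fintype V] (G : SimpleGraph V) (t : ℕ) (c : Sym2 V → ℕ)
    (h : IsProperTEdgeColoring G t c) : t ≤ Fintype.card (Sym2 V) := by
  classical
  rcases Nat.eq_zero_or_pos t with rfl | ht
  · exact Nat.zero_le _
  obtain ⟨e0, -, -⟩ := h.2.2 1 (by simp; omega)
  choose ed hed hced using h.2.2
  have : Finset.card (Finset.Icc 1 t) ≤ Finset.card (Finset.univ : Finset (Sym2 V)) := by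
    apply Finset.card_le_card_of_injOn (fun x => if hx : x ∈ Finset.Icc 1 t then ed x hx else e0)
    · intro a _; exact Finset.mem_univ _
    · intro a ha b hb hab
      simp only [Finset.mem_coe] at ha hb
      simp only at hab
      rw [dif_pos ha, dif_pos hb] at hab
      have := hced a ha
      rw [hab, hced b hb] at this
      exact this.symm
  simpa [Nat.card_Icc] using this
end Aux

theorem stmt_1
    (C : ∀ (W : Type) [Fintype W], SimpleGraph W → Prop)
    (hiso : ∀ (W₁ W₂ : Type) [Fintype W₁] [Fintype W₂]
      (G₁ : SimpleGraph W₁) (G₂ : SimpleGraph W₂), G₁ ≃g G₂ → C W₁ G₁ → C W₂ G₂)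
    (hclosed : ∀ (W : Type) [Fintype W] (G : SimpleGraph W) (k : ℕ) (g : Fin k → W),
      C W G → C (W ⊕ Fin k) (attachPendants G k g))
    (f : ℕ → ℕ)
    (hbound : ∀ (W : Type) [Fintype W] (Gp : SimpleGraph W),
      C W Gp → IntervalColorable Gp → Wint Gp ≤ f (Fintype.card W))
    (V : Type) [Fintype V] (G : SimpleGraph V) (hG : C V G) :
    Wdef G ≤ f (Fintype.card V + graphDef G) := by
  classical
  have key : ∀ t, (∃ c, IsProperTEdgeColoring G t c ∧ colDef G c = graphDef G) →
      t ≤ f (Fintype.card V + graphDef G) := by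
    rintro t ⟨c, hc, hdef⟩
    set S : V → Finset ℕ := fun v => vSpectrum G c v with hS
    set D : V → Finset ℕ := fun v =>
      Finset.Icc ((S v).min.getD 1) ((S v).max.getD 0) \ S v with hDdef
    -- basic facts about D
    have hDempty : ∀ v, S v = ∅ → D v = ∅ := by
      intro v hv
      rw [hDdef]
      simp only [hv, Finset.sdiff_empty, Finset.max_empty, Finset.min_empty]
      exact Finset.Icc_eq_empty (by decide)
    have hD_nonempty : ∀ v, ∀ m ∈ D v, (S v).Nonempty := by
      intro v m hm
      by_contra h
      rw [Finset.not_nonempty_iff_eq_empty] at h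
      rw [hDempty v h] at hm
      exact absurd hm (Finset.notMem_empty m)
    have hD_not_mem : ∀ v, ∀ m ∈ D v, m ∉ S v := by
      intro v m hm
      rw [hDdef] at hm
      exact (Finset.mem_sdiff.1 hm).2
    have hD_bounds : ∀ v (hv : (S v).Nonempty), ∀ m ∈ D v,
        (S v).min' hv ≤ m ∧ m ≤ (S v).max' hv := by
      intro v hv m hm
      rw [hDdef] at hm
      have := (Finset.mem_sdiff.1 hm).1
      rw [min_getD_eq hv, max_getD_eq hv] at this
      exact Finset.mem_Icc.1 this
    have hDcard : ∀ v, (D v).card = setDef (S v) := by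
      intro v
      by_cases hv : (S v).Nonempty
      · have hsub : S v ⊆ Finset.Icc ((S v).min' hv) ((S v).max' hv) := fun x hx =>
          Finset.mem_Icc.2 ⟨Finset.min'_le _ _ hx, Finset.le_max' _ _ hx⟩
        have h1 : 1 ≤ (S v).card := Finset.card_pos.2 hv
        have h2 : (S v).card ≤ ((S v).max' hv) + 1 - ((S v).min' hv) := by
          simpa [Nat.card_Icc] using Finset.card_le_card hsub
        have hab : (S v).min' hv ≤ (S v).max' hv :=
          Finset.min'_le _ _ (Finset.max'_mem _ _)
        rw [hDdef]
        simp only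
        rw [min_getD_eq hv, max_getD_eq hv, Finset.card_sdiff_of_subset hsub, Nat.card_Icc, setDef,
          min_getD_eq hv, max_getD_eq hv]
        omega
      · rw [Finset.not_nonempty_iff_eq_empty] at hv
        rw [hDempty v hv, hv]
        simp only [Finset.card_empty, setDef_empty]
    -- spectrum values lie in [1, t]
    have hS_range : ∀ v, ∀ m ∈ S v, m ∈ Finset.Icc 1 t := by
      intro v m hm
      obtain ⟨u, hu, hcu⟩ := (mem_vSpectrum_iff G c v m).1 hm
      exact hcu ▸ hc.2.1 _ ((G.mem_edgeSet).2 hu)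
    set d := graphDef G with hd
    have hsum : ∑ v, (D v).card = d := by
      rw [← hdef, colDef]
      exact Finset.sum_congr rfl (fun v _ => hDcard v)
    -- index the missing colors by Fin d
    set T : Finset ((_ : V) × ℕ) := Finset.univ.sigma (fun v => D v) with hT
    have hTcard : T.card = d := by rw [hT, Finset.card_sigma]; exact hsum
    set eqv := T.equivFinOfCardEq hTcard with heqv
    set g : Fin d → V := fun i => (eqv.symm i).1.1 with hg
    set k : Fin d → ℕ := fun i => (eqv.symm i).1.2 with hk
    have hkD : ∀ i, k i ∈ D (g i) := fun i => (Finset.mem_sigma.1 (eqv.symm i).2).2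
    have hinj : ∀ i j, g i = g j → k i = k j → i = j := by
      intro i j h1 h2
      have h3 : (eqv.symm i : (_ : V) × ℕ) = (eqv.symm j : (_ : V) × ℕ) :=
        Sigma.ext h1 (heq_of_eq h2)
      have h4 : eqv.symm i = eqv.symm j := Subtype.ext h3
      simpa using congrArg eqv h4
    have hsurj : ∀ v, ∀ m ∈ D v, ∃ i, g i = v ∧ k i = m := by
      intro v m hm
      refine ⟨eqv ⟨⟨v, m⟩, Finset.mem_sigma.2 ⟨Finset.mem_univ _, hm⟩⟩, ?_, ?_⟩
      · rw [hg]; simp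
      · rw [hk]; simp
    -- the pendant graph and coloring
    set G' := attachPendants G d g with hG'
    set c' := pendantColor c k with hc'
    have edge_cases : ∀ e ∈ G'.edgeSet,
        (∃ x y, G.Adj x y ∧ e = s(Sum.inl x, Sum.inl y)) ∨
        (∃ i, e = s(Sum.inl (g i), Sum.inr i)) := by
      intro e he
      induction e using Sym2.ind with
      | _ a b =>
        rw [SimpleGraph.mem_edgeSet, hG', attachPendants_adj] at he
        rcases he with ⟨x, y, rfl, rfl, h⟩ | ⟨i, rfl, rfl⟩ | ⟨i, rfl, rfl⟩
        · exact Or.inl ⟨x, y, h, rfl⟩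
        · exact Or.inr ⟨i, rfl⟩
        · exact Or.inr ⟨i, Sym2.eq_swap⟩
    have hmemA : ∀ x y, G.Adj x y → s(Sum.inl x, Sum.inl y) ∈ G'.edgeSet := by
      intro x y h
      rw [SimpleGraph.mem_edgeSet, hG', attachPendants_adj]
      exact Or.inl ⟨x, y, rfl, rfl, h⟩
    have hmemP : ∀ i, s(Sum.inl (g i), Sum.inr i) ∈ G'.edgeSet := by
      intro i
      rw [SimpleGraph.mem_edgeSet, hG', attachPendants_adj]
      exact Or.inr (Or.inl ⟨i, rfl, rfl⟩)
    -- key: value of an inl-inl edge at a shared vertex lies in the spectrum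
    have hvalS : ∀ x y (v : V), G.Adj x y → (Sum.inl v : V ⊕ Fin d) ∈ s(Sum.inl x, Sum.inl y) →
        c s(x, y) ∈ S v := by
      intro x y v hadj hv
      rw [Sym2.mem_iff] at hv
      rw [hS]
      rcases hv with h | h
      · have hx : v = x := Sum.inl_injective h
        subst hx
        exact (mem_vSpectrum_iff G c v _).2 ⟨y, hadj, rfl⟩
      · have hy : v = y := Sum.inl_injective h
        subst hy
        refine (mem_vSpectrum_iff G c v _).2 ⟨x, hadj.symm, ?_⟩
        rw [Sym2.eq_swap]
    -- properness
    have hproper : IsProperEdgeColoring G' c' := by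
      intro e he e' he' hne hshare
      obtain ⟨w, hw, hw'⟩ := hshare
      rcases edge_cases e he with ⟨x, y, hxy, rfl⟩ | ⟨i, rfl⟩ <;>
        rcases edge_cases e' he' with ⟨x', y', hxy', rfl⟩ | ⟨j, rfl⟩
      · -- both old edges
        rw [hc', pendantColor_inl_inl, pendantColor_inl_inl]
        have hne2 : s(x, y) ≠ s(x', y') := by
          intro h
          apply hne
          have := congrArg (Sym2.map (Sum.inl : V → V ⊕ Fin d)) h
          simpa using this
        apply hc.1 _ ((G.mem_edgeSet).2 hxy) _ ((G.mem_edgeSet).2 hxy') hne2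
        rw [Sym2.mem_iff] at hw hw'
        rcases hw with h | h <;> rcases hw' with h' | h'
        · exact ⟨x, by simp, by rw [Sum.inl_injective (h.symm.trans h')]; simp⟩
        · exact ⟨x, by simp, by rw [Sum.inl_injective (h.symm.trans h')]; simp⟩
        · exact ⟨y, by simp, by rw [Sum.inl_injective (h.symm.trans h')]; simp⟩
        · exact ⟨y, by simp, by rw [Sum.inl_injective (h.symm.trans h')]; simp⟩
      · -- old edge vs pendant edge
        rw [hc', pendantColor_inl_inl, pendantColor_inl_inr]
        have hwv : w = Sum.inl (g j) := by
          rw [Sym2.mem_iff] at hw hw'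
          rcases hw' with h' | h'
          · exact h'
          · exfalso; rcases hw with h | h <;> rw [h' ] at h <;> exact nomatch h
        subst hwv
        have hmem : c s(x, y) ∈ S (g j) := hvalS x y (g j) hxy hw
        intro hEq
        exact hD_not_mem _ _ (hkD j) (hEq ▸ hmem)
      · -- pendant edge vs old edge
        rw [hc', pendantColor_inl_inr, pendantColor_inl_inl]
        have hwv : w = Sum.inl (g i) := by
          rw [Sym2.mem_iff] at hw hw'
          rcases hw with h | h
          · exact h
          · exfalso; rcases hw' with h' | h' <;> rw [h] at h' <;> exact nomatch h'.symm
        subst hwv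
        have hmem : c s(x', y') ∈ S (g i) := hvalS x' y' (g i) hxy' hw'
        intro hEq
        exact hD_not_mem _ _ (hkD i) (hEq ▸ hmem)
      · -- two pendant edges
        rw [hc', pendantColor_inl_inr, pendantColor_inl_inr]
        have hij : i ≠ j := by
          intro h; exact hne (by rw [h])
        have hgij : g i = g j := by
          rw [Sym2.mem_iff] at hw hw'
          rcases hw with h | h <;> rcases hw' with h' | h'
          · exact Sum.inl_injective (h.symm.trans h')
          · exfalso; rw [h] at h'; exact nomatch h'
          · exfalso; rw [h] at h'; exact nomatch h'.symm
          · exfalso; rw [h] at h'; exact hij (Sum.inr_injective h')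
        intro hEq
        exact hij (hinj i j hgij hEq)
    -- values in range
    have hrange : ∀ e ∈ G'.edgeSet, c' e ∈ Finset.Icc 1 t := by
      intro e he
      rcases edge_cases e he with ⟨x, y, hxy, rfl⟩ | ⟨i, rfl⟩
      · rw [hc', pendantColor_inl_inl]
        exact hc.2.1 _ ((G.mem_edgeSet).2 hxy)
      · rw [hc', pendantColor_inl_inr]
        have hv : (S (g i)).Nonempty := hD_nonempty _ _ (hkD i)
        obtain ⟨hlo, hhi⟩ := hD_bounds (g i) hv _ (hkD i)
        have h1 := hS_range (g i) _ (Finset.min'_mem _ hv)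
        have h2 := hS_range (g i) _ (Finset.max'_mem _ hv)
        rw [Finset.mem_Icc] at h1 h2 ⊢
        omega
    -- all colors used
    have husd : ∀ m ∈ Finset.Icc 1 t, ∃ e ∈ G'.edgeSet, c' e = m := by
      intro m hm
      obtain ⟨e0, he0, hce0⟩ := hc.2.2 m hm
      induction e0 using Sym2.ind with
      | _ x y =>
        refine ⟨s(Sum.inl x, Sum.inl y), hmemA x y ((G.mem_edgeSet).1 he0), ?_⟩
        rw [hc', pendantColor_inl_inl, hce0]
    -- spectra of the new coloring
    have hspec_inr : ∀ i, vSpectrum G' c' (Sum.inr i) = {k i} := by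
      intro i
      ext m
      rw [mem_vSpectrum_iff, Finset.mem_singleton]
      constructor
      · rintro ⟨u, hu, hval⟩
        rw [hG', attachPendants_adj] at hu
        rcases hu with ⟨x, y, h, _, _⟩ | ⟨j, h, _⟩ | ⟨j, rfl, h⟩
        · exact nomatch h
        · exact nomatch h
        · have : i = j := Sum.inr_injective h
          subst this
          rw [hc', pendantColor_inr_inl] at hval
          exact hval.symm
      · rintro rfl
        refine ⟨Sum.inl (g i), ?_, ?_⟩
        · rw [hG', attachPendants_adj]
          exact Or.inr (Or.inr ⟨i, rfl, rfl⟩)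
        · rw [hc', pendantColor_inr_inl]
    have hspec_inl : ∀ v, vSpectrum G' c' (Sum.inl v) = S v ∪ D v := by
      intro v
      ext m
      rw [mem_vSpectrum_iff, Finset.mem_union]
      constructor
      · rintro ⟨u, hu, hval⟩
        rw [hG', attachPendants_adj] at hu
        rcases hu with ⟨x, y, hvx, rfl, hadj⟩ | ⟨i, hvg, rfl⟩ | ⟨i, h, h2⟩
        · have : v = x := Sum.inl_injective hvx
          subst this
          rw [hc', pendantColor_inl_inl] at hval
          exact Or.inl ((mem_vSpectrum_iff G c v m).2 ⟨y, hadj, hval⟩)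
        · have : v = g i := Sum.inl_injective hvg
          rw [hc', pendantColor_inl_inr] at hval
          exact Or.inr (this ▸ hval ▸ hkD i)
        · exact nomatch h2
      · rintro (hmS | hmD)
        · obtain ⟨u, hu, hval⟩ := (mem_vSpectrum_iff G c v m).1 hmS
          refine ⟨Sum.inl u, ?_, ?_⟩
          · rw [hG', attachPendants_adj]
            exact Or.inl ⟨v, u, rfl, rfl, hu⟩
          · rw [hc', pendantColor_inl_inl]; exact hval
        · obtain ⟨i, hgi, hki⟩ := hsurj v m hmD
          refine ⟨Sum.inr i, ?_, ?_⟩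
          · rw [hG', attachPendants_adj]
            exact Or.inr (Or.inl ⟨i, by rw [hgi], rfl⟩)
          · rw [hc', pendantColor_inl_inr]; exact hki
    -- the union S v ∪ D v is an interval
    have hcol0 : colDef G' c' = 0 := by
      rw [colDef]
      apply Finset.sum_eq_zero
      intro w _
      cases w with
      | inr i => rw [hspec_inr i]; exact setDef_singleton _
      | inl v =>
        rw [hspec_inl v]
        by_cases hv : (S v).Nonempty
        · have hunion : S v ∪ D v = Finset.Icc ((S v).min' hv) ((S v).max' hv) := by
            ext x
            rw [Finset.mem_union, Finset.mem_Icc]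
            constructor
            · rintro (h | h)
              · exact ⟨Finset.min'_le _ _ h, Finset.le_max' _ _ h⟩
              · exact hD_bounds v hv x h
            · intro hx
              by_cases hxS : x ∈ S v
              · exact Or.inl hxS
              · refine Or.inr ?_
                rw [hDdef]
                simp only [Finset.mem_sdiff]
                rw [min_getD_eq hv, max_getD_eq hv]
                exact ⟨Finset.mem_Icc.2 hx, hxS⟩
          rw [hunion]
          exact setDef_Icc (Finset.min'_le _ _ (Finset.max'_mem _ _))
        · rw [Finset.not_nonempty_iff_eq_empty] at hv
          rw [hv, hDempty v hv]
          simp [setDef_empty]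
    have hTcol : IsProperTEdgeColoring G' t c' := ⟨hproper, hrange, husd⟩
    have hIC : IntervalColorable G' := ⟨c', hproper, hcol0⟩
    have hCG' : C (V ⊕ Fin d) G' := hclosed V G d g hG
    have ht_le : t ≤ Wint G' := by
      apply le_csSup
      · exact ⟨Fintype.card (Sym2 (V ⊕ Fin d)), by
          rintro t' ⟨c'', h'', -⟩
          exact t_le_of_TColoring G' t' c'' h''⟩
      · exact ⟨c', hTcol, hcol0⟩
    have hW_le : Wint G' ≤ f (Fintype.card (V ⊕ Fin d)) := hbound _ G' hCG' hIC
    calc t ≤ Wint G' := ht_le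
      _ ≤ f (Fintype.card (V ⊕ Fin d)) := hW_le
      _ = f (Fintype.card V + d) := by rw [Fintype.card_sum, Fintype.card_fin]
  by_cases hne : {t | ∃ c, IsProperTEdgeColoring G t c ∧ colDef G c = graphDef G}.Nonempty
  · exact csSup_le hne (fun t ht => key t ht)
  · rw [Wdef, Set.not_nonempty_iff_eq_empty.1 hne, csSup_empty]
    exact Nat.zero_le _
end

section
/- If G is a connected graph, then W_def(G) ≤ 1 + def(G) + max_{P ∈ 𝐏} Σ_{v ∈ V(P)} (d_G(v) − 1), where 𝐏 is the set of all shortest paths in G. -/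
open scoped Classical

lemma per_vertex_aux (S : Finset ℕ) {a b : ℕ} (ha : a ∈ S) (hb : b ∈ S) :
    b ≤ a + (S.card - 1) + setDef S := by
  have hne : S.Nonempty := ⟨a, ha⟩
  have hmax : S.max = (S.max' hne : ℕ) := (Finset.coe_max' hne).symm
  have hmin : S.min = (S.min' hne : ℕ) := (Finset.coe_min' hne).symm
  have h1 : b ≤ S.max' hne := Finset.le_max' S b hb
  have h2 : S.min' hne ≤ a := Finset.min'_le S a ha
  have e1 : ((S.max' hne : WithBot ℕ)).getD 0 = S.max' hne := rfl
  have e2 : ((S.min' hne : WithTop ℕ)).getD 0 = S.min' hne := rfl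
  unfold setDef
  rw [hmax, hmin, e1, e2]
  omega

lemma adj_mem_spectrum_aux {V : Type*} [Fintype V] (G : SimpleGraph V) (c : Sym2 V → ℕ)
    {x y : V} (h : G.Adj x y) : c s(x, y) ∈ vSpectrum G c x := by
  unfold vSpectrum
  exact Finset.mem_image.2 ⟨y, Finset.mem_filter.2 ⟨Finset.mem_univ _, h⟩, rfl⟩

lemma exists_mem_spectrum_aux {V : Type*} [Fintype V] (G : SimpleGraph V) (c : Sym2 V → ℕ)
    (e : Sym2 V) (he : e ∈ G.edgeSet) : ∃ x, c e ∈ vSpectrum G c x := by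
  induction e using Sym2.ind with
  | _ a b => exact ⟨a, adj_mem_spectrum_aux G c ((SimpleGraph.mem_edgeSet G).mp he)⟩

lemma card_spectrum_le_aux {V : Type*} [Fintype V] (G : SimpleGraph V) (c : Sym2 V → ℕ)
    (x : V) : (vSpectrum G c x).card ≤ G.degree x := by
  unfold vSpectrum
  refine (Finset.card_image_le).trans ?_
  rw [SimpleGraph.degree]
  apply le_of_eq
  congr 1
  ext y
  simp [SimpleGraph.mem_neighborFinset]

lemma chain_aux {V : Type*} [Fintype V] (G : SimpleGraph V) (c : Sym2 V → ℕ) {u v : V}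
    (p : G.Walk u v) :
    ∀ a ∈ vSpectrum G c u, ∀ b ∈ vSpectrum G c v, b ≤ a + (p.support.map
      (fun x => ((vSpectrum G c x).card - 1) + setDef (vSpectrum G c x))).sum := by
  induction p with
  | nil =>
    intro a ha b hb
    simp only [SimpleGraph.Walk.support_nil, List.map_cons, List.map_nil, List.sum_cons,
      List.sum_nil, add_zero]
    have := per_vertex_aux _ ha hb
    omega
  | @cons u w v h q ih =>
    intro a ha b hb
    have hm1 : c s(u, w) ∈ vSpectrum G c u := adj_mem_spectrum_aux G c h
    have hm2 : c s(u, w) ∈ vSpectrum G c w := by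
      have := adj_mem_spectrum_aux G c h.symm
      rwa [Sym2.eq_swap] at this
    have h1 := ih _ hm2 b hb
    have h2 := per_vertex_aux _ ha hm1
    simp only [SimpleGraph.Walk.support_cons, List.map_cons, List.sum_cons]
    omega

theorem stmt_5 {V : Type*} [Fintype V] (G : SimpleGraph V) (hG : G.Connected) :
    Wdef G ≤ 1 + graphDef G +
      sSup {s : ℕ | ∃ (u v : V) (p : G.Walk u v), p.IsPath ∧ p.length = G.dist u v ∧
        s = ∑ x ∈ p.support.toFinset, (G.degree x - 1)} := by
  set M := sSup {s : ℕ | ∃ (u v : V) (p : G.Walk u v), p.IsPath ∧ p.length = G.dist u v ∧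
        s = ∑ x ∈ p.support.toFinset, (G.degree x - 1)} with hM
  apply csSup_le'
  rintro t ⟨c, ⟨hprop, hrange, hsurj⟩, hdef⟩
  rcases Nat.eq_zero_or_pos t with rfl | ht
  · omega
  · obtain ⟨e1, he1, hc1⟩ := hsurj 1 (Finset.mem_Icc.mpr ⟨le_refl 1, ht⟩)
    obtain ⟨et, het, hct⟩ := hsurj t (Finset.mem_Icc.mpr ⟨ht, le_refl t⟩)
    obtain ⟨u, hu⟩ := exists_mem_spectrum_aux G c e1 he1
    obtain ⟨v, hv⟩ := exists_mem_spectrum_aux G c et het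
    rw [hc1] at hu
    rw [hct] at hv
    obtain ⟨p, hp, hlen⟩ := hG.exists_path_of_dist u v
    have key := chain_aux G c p 1 hu t hv
    rw [← List.sum_toFinset _ hp.support_nodup] at key
    have hsplit : ∑ x ∈ p.support.toFinset,
        (((vSpectrum G c x).card - 1) + setDef (vSpectrum G c x))
        = (∑ x ∈ p.support.toFinset, ((vSpectrum G c x).card - 1))
          + ∑ x ∈ p.support.toFinset, setDef (vSpectrum G c x) :=
      Finset.sum_add_distrib
    have hA : (∑ x ∈ p.support.toFinset, ((vSpectrum G c x).card - 1))
        ≤ ∑ x ∈ p.support.toFinset, (G.degree x - 1) := by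
      apply Finset.sum_le_sum
      intro x _
      have := card_spectrum_le_aux G c x
      omega
    have hD : (∑ x ∈ p.support.toFinset, setDef (vSpectrum G c x)) ≤ graphDef G := by
      rw [← hdef]
      exact Finset.sum_le_sum_of_subset (Finset.subset_univ _)
    have hmem : (∑ x ∈ p.support.toFinset, (G.degree x - 1)) ∈
        {s : ℕ | ∃ (u v : V) (p : G.Walk u v), p.IsPath ∧ p.length = G.dist u v ∧
          s = ∑ x ∈ p.support.toFinset, (G.degree x - 1)} := ⟨u, v, p, hp, hlen, rfl⟩
    have hbdd : BddAbove {s : ℕ | ∃ (u v : V) (p : G.Walk u v), p.IsPath ∧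
        p.length = G.dist u v ∧ s = ∑ x ∈ p.support.toFinset, (G.degree x - 1)} := by
      refine ⟨∑ x : V, G.degree x, ?_⟩
      rintro s ⟨u', v', p', _, _, rfl⟩
      calc ∑ x ∈ p'.support.toFinset, (G.degree x - 1)
          ≤ ∑ x ∈ p'.support.toFinset, G.degree x :=
            Finset.sum_le_sum (fun x _ => Nat.sub_le _ _)
        _ ≤ ∑ x : V, G.degree x := Finset.sum_le_sum_of_subset (Finset.subset_univ _)
    have hle : (∑ x ∈ p.support.toFinset, (G.degree x - 1)) ≤ M := le_csSup hbdd hmem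
    omega
end

section
/- If G is a connected graph, then W_def(G) ≤ 1 + def(G) + (diam(G) + 1)(Δ(G) − 1). -/
open scoped Classical

-- aux lemmas
section Aux
variable {V : Type*} [Fintype V] {G : SimpleGraph V} {c : Sym2 V → ℕ}

lemma mem_vSpectrum {v u : V} (h : G.Adj v u) : c s(v, u) ∈ vSpectrum G c v := by
  apply Finset.mem_image_of_mem
  simp [h]

lemma vSpectrum_card_le (v : V) : (vSpectrum G c v).card ≤ G.maxDegree := by
  calc (vSpectrum G c v).card ≤ (Finset.univ.filter (fun u => G.Adj v u)).card :=
        Finset.card_image_le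
    _ = G.degree v := by rw [SimpleGraph.degree, SimpleGraph.neighborFinset_eq_filter]
    _ ≤ G.maxDegree := G.degree_le_maxDegree v

lemma max_le_min_add (S : Finset ℕ) (hS : S.Nonempty) :
    S.max.getD 0 ≤ S.min.getD 0 + (S.card - 1) + setDef S := by
  have h1 : S.max.getD 0 = S.max' hS := by rw [← Finset.coe_max' hS]; rfl
  have h2 : S.min.getD 0 = S.min' hS := by rw [← Finset.coe_min' hS]; rfl
  have h3 : S.min' hS ≤ S.max' hS := S.min'_le _ (S.max'_mem hS)
  unfold setDef
  omega

lemma le_max_getD {S : Finset ℕ} {a : ℕ} (h : a ∈ S) : a ≤ S.max.getD 0 := by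
  have hS : S.Nonempty := ⟨a, h⟩
  have h1 : S.max.getD 0 = S.max' hS := by rw [← Finset.coe_max' hS]; rfl
  rw [h1]; exact S.le_max' a h

lemma min_getD_le {S : Finset ℕ} {a : ℕ} (h : a ∈ S) : S.min.getD 0 ≤ a := by
  have hS : S.Nonempty := ⟨a, h⟩
  have h1 : S.min.getD 0 = S.min' hS := by rw [← Finset.coe_min' hS]; rfl
  rw [h1]; exact S.min'_le a h

lemma walk_bound {x y : V} (p : G.Walk x y) :
    (vSpectrum G c y).max.getD 0 ≤ (vSpectrum G c x).max.getD 0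
      + p.length * (G.maxDegree - 1)
      + (p.support.tail.map (fun v => setDef (vSpectrum G c v))).sum := by
  induction p with
  | nil => simp
  | @cons x w y h p ih =>
    have hw : c s(x, w) ∈ vSpectrum G c w := by
      rw [Sym2.eq_swap]; exact mem_vSpectrum h.symm
    have hx : c s(x, w) ∈ vSpectrum G c x := mem_vSpectrum h
    have hne : (vSpectrum G c w).Nonempty := ⟨_, hw⟩
    have h1 : (vSpectrum G c w).max.getD 0 ≤ (vSpectrum G c w).min.getD 0
        + ((vSpectrum G c w).card - 1) + setDef (vSpectrum G c w) :=
      max_le_min_add _ hne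
    have h2 : (vSpectrum G c w).min.getD 0 ≤ c s(x, w) := min_getD_le hw
    have h3 : c s(x, w) ≤ (vSpectrum G c x).max.getD 0 := le_max_getD hx
    have h4 : (vSpectrum G c w).card - 1 ≤ G.maxDegree - 1 :=
      Nat.sub_le_sub_right (vSpectrum_card_le w) 1
    have hlen : (SimpleGraph.Walk.cons h p).length = p.length + 1 :=
      SimpleGraph.Walk.length_cons h p
    have hsup : (SimpleGraph.Walk.cons h p).support.tail = p.support.tail.cons w := by
      rw [SimpleGraph.Walk.support_cons, List.tail_cons]
      exact p.support_eq_cons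
    rw [hlen, hsup]
    simp only [List.map_cons, List.sum_cons, Nat.add_mul, Nat.one_mul]
    have := ih
    set A := p.length * (G.maxDegree - 1)
    omega

end Aux

theorem stmt_6 {V : Type*} [Fintype V] (G : SimpleGraph V) (hG : G.Connected) :
    Wdef G ≤ 1 + graphDef G + (G.diam + 1) * (G.maxDegree - 1) := by
  have key : ∀ t ∈ {t | ∃ c, IsProperTEdgeColoring G t c ∧ colDef G c = graphDef G},
      t ≤ 1 + graphDef G + (G.diam + 1) * (G.maxDegree - 1) := by
    rintro t ⟨c, ⟨hprop, hrange, hall⟩, hdef⟩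
    rcases Nat.eq_zero_or_pos t with ht | ht
    · omega
    -- get edges of color 1 and t
    obtain ⟨e1, he1, hc1⟩ := hall 1 (Finset.mem_Icc.mpr ⟨le_refl 1, ht⟩)
    obtain ⟨e2, he2, hc2⟩ := hall t (Finset.mem_Icc.mpr ⟨ht, le_refl t⟩)
    induction e1 using Sym2.ind with | _ x x' =>
    induction e2 using Sym2.ind with | _ y y' =>
    rw [SimpleGraph.mem_edgeSet] at he1 he2
    -- 1 ∈ S(x), t ∈ S(y)
    have h1x : (1 : ℕ) ∈ vSpectrum G c x := hc1 ▸ mem_vSpectrum he1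
    have hty : t ∈ vSpectrum G c y := hc2 ▸ mem_vSpectrum he2
    -- diameter finiteness
    have hne : Nonempty V := hG.nonempty
    have hetop : G.ediam ≠ ⊤ := by
      obtain ⟨u, v, huv⟩ := SimpleGraph.exists_edist_eq_ediam_of_finite (G := G)
      rw [← huv]
      exact (SimpleGraph.edist_ne_top_iff_reachable).mpr (hG u v)
    -- a path from x to y of length ≤ diam
    obtain ⟨p0, hp0⟩ := (hG x y).exists_walk_length_eq_dist
    set p := p0.bypass with hp
    have hpath : p.IsPath := p0.bypass_isPath
    have hplen : p.length ≤ G.diam := by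
      calc p.length ≤ p0.length := p0.length_bypass_le
        _ = G.dist x y := hp0
        _ ≤ G.diam := SimpleGraph.dist_le_diam hetop
    -- main chain
    have hchain := walk_bound (c := c) p
    have hty' : t ≤ (vSpectrum G c y).max.getD 0 := le_max_getD hty
    have hxne : (vSpectrum G c x).Nonempty := ⟨_, h1x⟩
    have hx1 : (vSpectrum G c x).max.getD 0 ≤ (vSpectrum G c x).min.getD 0
        + ((vSpectrum G c x).card - 1) + setDef (vSpectrum G c x) := max_le_min_add _ hxne
    have hx2 : (vSpectrum G c x).min.getD 0 ≤ 1 := min_getD_le h1x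
    have hx3 : (vSpectrum G c x).card - 1 ≤ G.maxDegree - 1 :=
      Nat.sub_le_sub_right (vSpectrum_card_le x) 1
    -- sum over tail + def x ≤ colDef
    have hnodup : p.support.Nodup := hpath.support_nodup
    have hsupp : p.support = x :: p.support.tail := p.support_eq_cons
    have hxnot : x ∉ p.support.tail := by
      rw [hsupp] at hnodup
      exact (List.nodup_cons.mp hnodup).1
    have htailnodup : p.support.tail.Nodup := by
      rw [hsupp] at hnodup
      exact (List.nodup_cons.mp hnodup).2
    have hsum : setDef (vSpectrum G c x)
        + (p.support.tail.map (fun v => setDef (vSpectrum G c v))).sum ≤ colDef G c := by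
      rw [← List.sum_toFinset _ htailnodup]
      have hxnot' : x ∉ p.support.tail.toFinset := by
        simpa using hxnot
      rw [← Finset.sum_insert (f := fun v => setDef (vSpectrum G c v)) hxnot']
      exact Finset.sum_le_sum_of_subset (Finset.subset_univ _)
    have hlen' : p.length * (G.maxDegree - 1) ≤ G.diam * (G.maxDegree - 1) :=
      Nat.mul_le_mul_right _ hplen
    have hrhs : (G.diam + 1) * (G.maxDegree - 1)
        = G.diam * (G.maxDegree - 1) + (G.maxDegree - 1) := by ring
    rw [hdef] at hsum
    omega
  rcases Set.eq_empty_or_nonempty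
      {t | ∃ c, IsProperTEdgeColoring G t c ∧ colDef G c = graphDef G} with h | h
  · unfold Wdef
    rw [h, csSup_empty]
    exact Nat.zero_le _
  · exact csSup_le h key
end

section
/- If a graph G has no perfect matching and G is interval colorable, then w(G) ≥ max{Δ(G), 2δ(G)}. -/
open scoped Classical

/- ========== auxiliary lemmas ========== -/

lemma setDef_nonempty_eq {S : Finset ℕ} (hS : S.Nonempty) :
    setDef S = (S.max' hS - S.min' hS) - (S.card - 1) := by
  unfold setDef
  rw [← Finset.coe_max' hS, ← Finset.coe_min' hS]
  rfl

lemma setDef_Icc_s10 {p q : ℕ} (hpq : p ≤ q) : setDef (Finset.Icc p q) = 0 := by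
  have hne : (Finset.Icc p q).Nonempty := Finset.nonempty_Icc.mpr hpq
  rw [setDef_nonempty_eq hne]
  have hmax : (Finset.Icc p q).max' hne = q := by
    apply le_antisymm
    · exact Finset.max'_le _ _ _ (fun x hx => (Finset.mem_Icc.mp hx).2)
    · exact Finset.le_max' _ _ (Finset.mem_Icc.mpr ⟨hpq, le_rfl⟩)
  have hmin : (Finset.Icc p q).min' hne = p := by
    apply le_antisymm
    · exact Finset.min'_le _ _ (Finset.mem_Icc.mpr ⟨le_rfl, hpq⟩)
    · exact Finset.le_min' _ _ _ (fun x hx => (Finset.mem_Icc.mp hx).1)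
  rw [hmax, hmin, Nat.card_Icc]
  omega

lemma eq_Icc_of_setDef_zero {S : Finset ℕ} (hS : S.Nonempty) (h0 : setDef S = 0) :
    S = Finset.Icc (S.min' hS) (S.max' hS) := by
  have hsub : S ⊆ Finset.Icc (S.min' hS) (S.max' hS) := fun x hx =>
    Finset.mem_Icc.mpr ⟨Finset.min'_le _ _ hx, Finset.le_max' _ _ hx⟩
  refine Finset.eq_of_subset_of_card_le hsub ?_
  rw [setDef_nonempty_eq hS] at h0
  have h1 : S.max' hS - S.min' hS ≤ S.card - 1 := Nat.sub_eq_zero_iff_le.mp h0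
  have hcard : 1 ≤ S.card := Finset.card_pos.mpr hS
  have hmm : S.min' hS ≤ S.max' hS := Finset.min'_le _ _ (Finset.max'_mem _ hS)
  rw [Nat.card_Icc]
  omega

/- ========== the rank function ========== -/

noncomputable def rkk (U : Finset ℕ) (k : ℕ) : ℕ := (U.filter (· ≤ k)).card

lemma rkk_mono (U : Finset ℕ) {j k : ℕ} (h : j ≤ k) : rkk U j ≤ rkk U k := by
  apply Finset.card_le_card
  intro x hx
  rcases Finset.mem_filter.mp hx with ⟨hxU, hxj⟩
  exact Finset.mem_filter.mpr ⟨hxU, le_trans hxj h⟩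

lemma rkk_pos (U : Finset ℕ) {k : ℕ} (hk : k ∈ U) : 1 ≤ rkk U k :=
  Finset.card_pos.mpr ⟨k, Finset.mem_filter.mpr ⟨hk, le_rfl⟩⟩

lemma rkk_le (U : Finset ℕ) (k : ℕ) : rkk U k ≤ U.card :=
  Finset.card_le_card (Finset.filter_subset _ _)

lemma rkk_lt (U : Finset ℕ) {j k : ℕ} (h : j < k) (hk : k ∈ U) : rkk U j < rkk U k := by
  apply Finset.card_lt_card
  constructor
  · intro x hx
    rcases Finset.mem_filter.mp hx with ⟨hxU, hxj⟩
    exact Finset.mem_filter.mpr ⟨hxU, le_trans hxj (le_of_lt h)⟩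
  · intro hsub
    have := hsub (Finset.mem_filter.mpr ⟨hk, le_rfl⟩)
    exact absurd (Finset.mem_filter.mp this).2 (not_le.mpr h)

lemma rkk_injOn (U : Finset ℕ) : Set.InjOn (rkk U) ↑U := by
  intro a ha b hb hab
  by_contra hne
  rcases lt_or_gt_of_ne hne with hlt | hlt
  · exact absurd hab (ne_of_lt (rkk_lt U hlt (Finset.mem_coe.mp hb)))
  · exact absurd hab.symm (ne_of_lt (rkk_lt U hlt (Finset.mem_coe.mp ha)))

lemma rkk_add {U : Finset ℕ} {a b : ℕ} (hab : a ≤ b) (hsub : Finset.Icc a b ⊆ U) :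
    rkk U b = rkk U a + (b - a) := by
  have hdisj : Disjoint (U.filter (· ≤ a)) (Finset.Ioc a b) := by
    rw [Finset.disjoint_left]
    intro x hx hx'
    exact absurd (Finset.mem_Ioc.mp hx').1 (not_lt.mpr (Finset.mem_filter.mp hx).2)
  have hun : U.filter (· ≤ b) = U.filter (· ≤ a) ∪ Finset.Ioc a b := by
    ext x
    simp only [Finset.mem_filter, Finset.mem_union, Finset.mem_Ioc]
    constructor
    · rintro ⟨hxU, hxb⟩
      by_cases hxa : x ≤ a
      · exact Or.inl ⟨hxU, hxa⟩
      · exact Or.inr ⟨not_le.mp hxa, hxb⟩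
    · rintro (⟨hxU, hxa⟩ | ⟨hax, hxb⟩)
      · exact ⟨hxU, le_trans hxa hab⟩
      · exact ⟨hsub (Finset.mem_Icc.mpr ⟨le_of_lt hax, hxb⟩), hxb⟩
  unfold rkk
  rw [hun, Finset.card_union_of_disjoint hdisj, Nat.card_Ioc]

/- ========== spectrum lemmas ========== -/

lemma vSpectrum_card {V : Type*} [Fintype V] {G : SimpleGraph V} {c : Sym2 V → ℕ}
    (hc : IsProperEdgeColoring G c) (v : V) :
    (vSpectrum G c v).card = G.degree v := by
  rw [vSpectrum, Finset.card_image_of_injOn]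
  · simp [SimpleGraph.degree, SimpleGraph.neighborFinset_eq_filter]
  · intro u hu u' hu' heq
    by_contra hne
    have hadju : G.Adj v u := (Finset.mem_filter.mp (Finset.mem_coe.mp hu)).2
    have hadju' : G.Adj v u' := (Finset.mem_filter.mp (Finset.mem_coe.mp hu')).2
    exact hc s(v, u) ((SimpleGraph.mem_edgeSet G).mpr hadju) s(v, u')
      ((SimpleGraph.mem_edgeSet G).mpr hadju')
      (fun hh => hne (Sym2.congr_right.mp hh))
      ⟨v, Sym2.mem_mk_left v u, Sym2.mem_mk_left v u'⟩ heq

lemma vSpectrum_mem {V : Type*} [Fintype V] {G : SimpleGraph V} {c : Sym2 V → ℕ} {v : V}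
    {x : ℕ} (hx : x ∈ vSpectrum G c v) : ∃ u, G.Adj v u ∧ c s(v, u) = x := by
  rcases Finset.mem_image.mp hx with ⟨u, hu, rfl⟩
  exact ⟨u, (Finset.mem_filter.mp hu).2, rfl⟩

/- ========== relabeling: the wint set is nonempty ========== -/

lemma wset_nonempty {V : Type*} [Fintype V] (G : SimpleGraph V) (hic : IntervalColorable G) :
    ∃ t, ∃ c', IsProperTEdgeColoring G t c' ∧ colDef G c' = 0 := by
  obtain ⟨c, hc, h0⟩ := hic
  set E : Finset (Sym2 V) := Finset.univ.filter (· ∈ G.edgeSet) with hE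
  set U : Finset ℕ := E.image c with hU
  have hmemU : ∀ e ∈ G.edgeSet, c e ∈ U := fun e he =>
    Finset.mem_image_of_mem c (Finset.mem_filter.mpr ⟨Finset.mem_univ _, he⟩)
  have hspecU : ∀ v : V, vSpectrum G c v ⊆ U := by
    intro v x hx
    obtain ⟨u, hadj, rfl⟩ := vSpectrum_mem hx
    exact hmemU _ ((SimpleGraph.mem_edgeSet G).mpr hadj)
  refine ⟨U.card, fun e => rkk U (c e), ⟨?_, ?_, ?_⟩, ?_⟩
  · -- proper
    intro e he e' he' hne hsh heq
    exact hc e he e' he' hne hsh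
      (rkk_injOn U (Finset.mem_coe.mpr (hmemU e he)) (Finset.mem_coe.mpr (hmemU e' he')) heq)
  · -- bounds
    intro e he
    exact Finset.mem_Icc.mpr ⟨rkk_pos U (hmemU e he), rkk_le U _⟩
  · -- all colors used
    have himg : U.image (rkk U) = Finset.Icc 1 U.card := by
      apply Finset.eq_of_subset_of_card_le
      · intro x hx
        rcases Finset.mem_image.mp hx with ⟨k, hk, rfl⟩
        exact Finset.mem_Icc.mpr ⟨rkk_pos U hk, rkk_le U k⟩
      · rw [Nat.card_Icc, Finset.card_image_of_injOn (rkk_injOn U)]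
        omega
    intro m hm
    have : m ∈ U.image (rkk U) := himg ▸ hm
    rcases Finset.mem_image.mp this with ⟨k, hkU, rfl⟩
    rcases Finset.mem_image.mp hkU with ⟨e, heE, rfl⟩
    exact ⟨e, (Finset.mem_filter.mp heE).2, rfl⟩
  · -- colDef = 0
    unfold colDef at h0 ⊢
    apply Finset.sum_eq_zero
    intro v _
    have himg : vSpectrum G (fun e => rkk U (c e)) v = (vSpectrum G c v).image (rkk U) := by
      simp only [vSpectrum, Finset.image_image]
      rfl
    rcases (vSpectrum G c v).eq_empty_or_nonempty with hemp | hne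
    · rw [himg, hemp]
      simp [setDef_empty]
    · have hsd : setDef (vSpectrum G c v) = 0 :=
        (Finset.sum_eq_zero_iff).mp h0 v (Finset.mem_univ v)
      set a := (vSpectrum G c v).min' hne with ha
      set b := (vSpectrum G c v).max' hne with hb
      have hIcc : vSpectrum G c v = Finset.Icc a b := eq_Icc_of_setDef_zero hne hsd
      have hsubU : Finset.Icc a b ⊆ U := hIcc ▸ hspecU v
      have hab : a ≤ b := Finset.min'_le _ _ (Finset.max'_mem _ hne)
      have hcardS : (vSpectrum G c v).card = b - a + 1 := by
        rw [hIcc, Nat.card_Icc]; omega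
      have himg2 : (vSpectrum G c v).image (rkk U) = Finset.Icc (rkk U a) (rkk U b) := by
        apply Finset.eq_of_subset_of_card_le
        · intro x hx
          rcases Finset.mem_image.mp hx with ⟨s, hs, rfl⟩
          have hs' : s ∈ Finset.Icc a b := hIcc ▸ hs
          rcases Finset.mem_Icc.mp hs' with ⟨h1, h2⟩
          exact Finset.mem_Icc.mpr ⟨rkk_mono U h1, rkk_mono U h2⟩
        · rw [Nat.card_Icc,
            Finset.card_image_of_injOn ((rkk_injOn U).mono (by exact_mod_cast hspecU v)),
            hcardS, rkk_add hab hsubU]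
          omega
      rw [himg, himg2]
      exact setDef_Icc_s10 (rkk_mono U hab)

theorem stmt_10 {V : Type*} [Fintype V] (G : SimpleGraph V)
    (h : ¬∃ M : G.Subgraph, M.IsPerfectMatching) (hic : IntervalColorable G) :
    max G.maxDegree (2 * G.minDegree) ≤ wint G := by
  have hV : Nonempty V := by
    by_contra hv
    haveI : IsEmpty V := not_nonempty_iff.mp hv
    exact h ⟨⊥, fun v hv => isEmptyElim v, fun v => isEmptyElim v⟩
  obtain ⟨t0, c0, ht0, hd0⟩ := wset_nonempty G hic
  unfold wint
  have hnes : {t | ∃ c, IsProperTEdgeColoring G t c ∧ colDef G c = 0}.Nonempty :=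
    ⟨t0, ⟨c0, ht0, hd0⟩⟩
  apply le_csInf hnes
  rintro t ⟨c, ⟨hprop, hbd, -⟩, hdef⟩
  have hdeg : ∀ v, G.degree v = (vSpectrum G c v).card := fun v => (vSpectrum_card hprop v).symm
  have hspecIcc : ∀ v : V, vSpectrum G c v ⊆ Finset.Icc 1 t := by
    intro v x hx
    obtain ⟨u, hadj, rfl⟩ := vSpectrum_mem hx
    exact hbd _ ((SimpleGraph.mem_edgeSet G).mpr hadj)
  rw [max_le_iff]
  constructor
  · apply SimpleGraph.maxDegree_le_of_forall_degree_le
    intro v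
    rw [hdeg v]
    calc (vSpectrum G c v).card ≤ (Finset.Icc 1 t).card := Finset.card_le_card (hspecIcc v)
    _ = t := by rw [Nat.card_Icc]; omega
  · by_contra hlt
    push_neg at hlt
    set d := G.minDegree with hd
    have hd1 : 1 ≤ d := by omega
    unfold colDef at hdef
    have hkey : ∀ v : V, ∃ u, G.Adj v u ∧ c s(v, u) = d := by
      intro v
      have hdegv : d ≤ G.degree v := SimpleGraph.minDegree_le_degree G v
      have hne : (vSpectrum G c v).Nonempty := Finset.card_pos.mp (by rw [← hdeg v]; omega)
      have hsd : setDef (vSpectrum G c v) = 0 :=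
        (Finset.sum_eq_zero_iff).mp hdef v (Finset.mem_univ v)
      set a := (vSpectrum G c v).min' hne with ha
      set b := (vSpectrum G c v).max' hne with hb
      have hIcc := eq_Icc_of_setDef_zero hne hsd
      have ha1 : 1 ≤ a := (Finset.mem_Icc.mp (hspecIcc v (Finset.min'_mem _ hne))).1
      have hbt : b ≤ t := (Finset.mem_Icc.mp (hspecIcc v (Finset.max'_mem _ hne))).2
      have hab : a ≤ b := Finset.min'_le _ _ (Finset.max'_mem _ hne)
      have hcard : b + 1 = a + G.degree v := by
        have hc2 := hdeg v
        rw [hIcc, Nat.card_Icc] at hc2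
        omega
      have hdmem : d ∈ vSpectrum G c v := by
        rw [hIcc]
        exact Finset.mem_Icc.mpr ⟨by omega, by omega⟩
      exact vSpectrum_mem hdmem
    refine h ⟨⟨Set.univ, fun x y => G.Adj x y ∧ c s(x, y) = d,
      fun hxy => hxy.1, fun _ => trivial,
      ⟨fun x y hxy => ⟨hxy.1.symm, by rw [Sym2.eq_swap]; exact hxy.2⟩⟩⟩, ?_, fun v => trivial⟩
    intro v _
    obtain ⟨u, hadj, hcu⟩ := hkey v
    refine ⟨u, ⟨hadj, hcu⟩, ?_⟩
    rintro w ⟨hadjw, hcw⟩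
    by_contra hwu
    exact hprop s(v, w) ((SimpleGraph.mem_edgeSet G).mpr hadjw) s(v, u)
      ((SimpleGraph.mem_edgeSet G).mpr hadj)
      (fun hh => hwu (Sym2.congr_right.mp hh))
      ⟨v, Sym2.mem_mk_left v w, Sym2.mem_mk_left v u⟩ (hcw.trans hcu.symm)
end

section
/- If G is a graph with an odd number of vertices, then def(G) ≥ (2|E(G)| − (|V(G)| − 1)·Δ(G)) / 2. -/
open scoped Classical

section DefAux

open Finset

variable {V : Type*} [Fintype V]

lemma adj_other {G : SimpleGraph V} {e : Sym2 V} {v : V}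
    (he : e ∈ G.edgeSet) (hv : v ∈ e) : G.Adj v (Sym2.Mem.other hv) := by
  rw [← SimpleGraph.mem_edgeSet, Sym2.other_spec hv]; exact he

omit [Fintype V] in
lemma edge_eq_of_color_eq {G : SimpleGraph V} {c : Sym2 V → ℕ}
    (hc : IsProperEdgeColoring G c) {e e' : Sym2 V}
    (he : e ∈ G.edgeSet) (he' : e' ∈ G.edgeSet) {v : V} (hv : v ∈ e) (hv' : v ∈ e')
    (h : c e = c e') : e = e' := by
  by_contra hne
  exact hc e he e' he' hne ⟨v, hv, hv'⟩ h

lemma mem_vSpectrum_of_mem {G : SimpleGraph V} (c : Sym2 V → ℕ) {e : Sym2 V} {v : V}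
    (he : e ∈ G.edgeSet) (hv : v ∈ e) : c e ∈ vSpectrum G c v := by
  classical
  have hce : c s(v, Sym2.Mem.other hv) = c e := by rw [Sym2.other_spec hv]
  rw [vSpectrum, Finset.mem_image]
  exact ⟨_, Finset.mem_filter.mpr ⟨Finset.mem_univ _, adj_other he hv⟩, hce⟩

lemma card_vSpectrum {G : SimpleGraph V} {c : Sym2 V → ℕ}
    (hc : IsProperEdgeColoring G c) (v : V) :
    (vSpectrum G c v).card = G.degree v := by
  classical
  have hinj : Set.InjOn (fun u => c s(v, u)) (Finset.univ.filter (fun u => G.Adj v u)) := by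
    intro u hu u' hu' h
    simp only [Finset.coe_filter, Set.mem_setOf_eq] at hu hu'
    have h1 : s(v, u) ∈ G.edgeSet := G.mem_edgeSet.mpr hu.2
    have h2 : s(v, u') ∈ G.edgeSet := G.mem_edgeSet.mpr hu'.2
    have := edge_eq_of_color_eq hc h1 h2 (Sym2.mem_mk_left v u) (Sym2.mem_mk_left v u') h
    exact Sym2.congr_right.mp this
  rw [vSpectrum, Finset.card_image_of_injOn hinj, SimpleGraph.degree,
    SimpleGraph.neighborFinset_eq_filter]

lemma card_filter_mem_sym2 {e : Sym2 V} (hd : ¬ e.IsDiag) :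
    (Finset.univ.filter (· ∈ e)).card = 2 := by
  classical
  induction e using Sym2.ind with
  | _ x y =>
    rw [Sym2.mk_isDiag_iff] at hd
    have h : (Finset.univ.filter (· ∈ s(x, y))) = {x, y} := by
      ext z; simp [Sym2.mem_iff]
    rw [h, Finset.card_insert_of_notMem (by simp [hd]), Finset.card_singleton]

lemma matching_bound {G : SimpleGraph V} (hodd : Odd (Fintype.card V))
    (M : Finset (Sym2 V)) (hM : M ⊆ G.edgeFinset)
    (hmatch : ∀ e ∈ M, ∀ e' ∈ M, e ≠ e' → ∀ v : V, ¬(v ∈ e ∧ v ∈ e')) :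
    2 * M.card + 1 ≤ Fintype.card V := by
  classical
  have hdisj : ∀ e ∈ M, ∀ e' ∈ M, e ≠ e' →
      Disjoint (Finset.univ.filter (· ∈ e)) (Finset.univ.filter (· ∈ e')) := by
    intro e he e' he' hne
    simp only [Finset.disjoint_left, Finset.mem_filter]
    rintro v ⟨-, hv⟩ ⟨-, hv'⟩
    exact hmatch e he e' he' hne v ⟨hv, hv'⟩
  have htwo : ∀ e ∈ M, (Finset.univ.filter (· ∈ e)).card = 2 := by
    intro e he
    exact card_filter_mem_sym2 (SimpleGraph.not_isDiag_of_mem_edgeFinset (hM he))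
  have hcard : (M.biUnion (fun e => Finset.univ.filter (· ∈ e))).card = 2 * M.card := by
    rw [Finset.card_biUnion hdisj, Finset.sum_congr rfl htwo, Finset.sum_const, smul_eq_mul,
      mul_comm]
  have hle : (M.biUnion (fun e => Finset.univ.filter (· ∈ e))).card ≤ Fintype.card V := by
    simpa using Finset.card_le_univ _
  obtain ⟨k, hk⟩ := hodd
  omega

lemma key_ineq {G : SimpleGraph V} (hodd : Odd (Fintype.card V))
    (c : Sym2 V → ℕ) (hc : IsProperEdgeColoring G c) :
    2 * G.edgeFinset.card ≤ (Fintype.card V - 1) * G.maxDegree + 2 * colDef G c := by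
  classical
  rcases Finset.eq_empty_or_nonempty G.edgeFinset with hE | hE
  · simp [hE]
  have hΔ : 0 < G.maxDegree := by
    obtain ⟨e, he⟩ := hE
    rw [SimpleGraph.mem_edgeFinset] at he
    obtain ⟨v, hv⟩ : ∃ v, v ∈ e := ⟨e.out.1, Sym2.out_fst_mem e⟩
    have : 0 < G.degree v :=
      (G.degree_pos_iff_exists_adj v).mpr ⟨_, adj_other he hv⟩
    exact lt_of_lt_of_le this (G.degree_le_maxDegree v)
  set Δ := G.maxDegree with hΔdef
  set n := Fintype.card V with hndef
  set Bad : Finset (Sym2 V) := G.edgeFinset.filter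
    (fun e => ∃ v ∈ e, ∃ e' ∈ G.edgeFinset, v ∈ e' ∧ c e' % Δ = c e % Δ ∧ c e' < c e)
    with hBaddef
  have hBadsub : Bad ⊆ G.edgeFinset := by
    rw [hBaddef]; exact Finset.filter_subset _ _
  -- Step A : Bad.card ≤ colDef G c
  have hBadcard : Bad.card ≤ colDef G c := by
    have hsub : Bad ⊆ Finset.univ.biUnion (fun v => G.edgeFinset.filter
        (fun e => v ∈ e ∧ ∃ e' ∈ G.edgeFinset, v ∈ e' ∧ c e' % Δ = c e % Δ ∧ c e' < c e)) := by
      intro e he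
      rw [hBaddef, Finset.mem_filter] at he
      obtain ⟨heE, v, hv, h⟩ := he
      exact Finset.mem_biUnion.mpr ⟨v, Finset.mem_univ v, Finset.mem_filter.mpr ⟨heE, hv, h⟩⟩
    have hstep : ∀ v : V, (G.edgeFinset.filter
        (fun e => v ∈ e ∧ ∃ e' ∈ G.edgeFinset, v ∈ e' ∧ c e' % Δ = c e % Δ ∧ c e' < c e)).card
        ≤ setDef (vSpectrum G c v) := by
      intro v
      set Bv := G.edgeFinset.filter
        (fun e => v ∈ e ∧ ∃ e' ∈ G.edgeFinset, v ∈ e' ∧ c e' % Δ = c e % Δ ∧ c e' < c e) with hBv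
      rcases Finset.eq_empty_or_nonempty Bv with h0 | ⟨e0, he0⟩
      · simp [h0]
      have hmemS : ∀ e ∈ Bv, c e ∈ vSpectrum G c v := by
        intro e he
        rw [hBv, Finset.mem_filter] at he
        exact mem_vSpectrum_of_mem c (SimpleGraph.mem_edgeFinset.mp he.1) he.2.1
      have hSne : (vSpectrum G c v).Nonempty := ⟨c e0, hmemS e0 he0⟩
      obtain ⟨b, hb⟩ := Finset.max_of_nonempty hSne
      obtain ⟨a, ha⟩ := Finset.min_of_nonempty hSne
      have hab : a ≤ b := by
        have h1 := Finset.min_le (Finset.mem_of_max hb)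
        rw [ha] at h1
        exact_mod_cast h1
      have hdegpos : 0 < G.degree v := by
        have he0' := he0
        rw [hBv, Finset.mem_filter] at he0'
        obtain ⟨he0E, hv0, -⟩ := he0'
        exact (G.degree_pos_iff_exists_adj v).mpr
          ⟨_, adj_other (SimpleGraph.mem_edgeFinset.mp he0E) hv0⟩
      have hrange : ∀ e ∈ Bv, c e ∈ Finset.Icc (a + G.degree v) b := by
        intro e he
        have hcecS := hmemS e he
        rw [hBv, Finset.mem_filter] at he
        obtain ⟨hv, e', he'E, hv', hmod, hlt⟩ := he.2
        have hce'S : c e' ∈ vSpectrum G c v :=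
          mem_vSpectrum_of_mem c (SimpleGraph.mem_edgeFinset.mp he'E) hv'
        have h1 : a ≤ c e' := by
          have := Finset.min_le hce'S; rw [ha] at this; exact_mod_cast this
        have h2 : c e ≤ b := by
          have := Finset.le_max hcecS; rw [hb] at this; exact_mod_cast this
        have hdvd : Δ ∣ c e - c e' := (Nat.modEq_iff_dvd' hlt.le).mp hmod
        have h3 : Δ ≤ c e - c e' := Nat.le_of_dvd (by omega) hdvd
        have h4 : G.degree v ≤ Δ := G.degree_le_maxDegree v
        rw [Finset.mem_Icc]
        omega
      have hinj : Set.InjOn c Bv := by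
        intro e he e' he' hcc
        rw [Finset.mem_coe, hBv, Finset.mem_filter] at he he'
        exact edge_eq_of_color_eq hc (SimpleGraph.mem_edgeFinset.mp he.1)
          (SimpleGraph.mem_edgeFinset.mp he'.1) he.2.1 he'.2.1 hcc
      have hcard1 : Bv.card = (Bv.image c).card := (Finset.card_image_of_injOn hinj).symm
      have hcard2 : (Bv.image c).card ≤ (Finset.Icc (a + G.degree v) b).card := by
        apply Finset.card_le_card
        intro x hx
        obtain ⟨e, he, rfl⟩ := Finset.mem_image.mp hx
        exact hrange e he
      rw [Nat.card_Icc] at hcard2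
      have hsd : setDef (vSpectrum G c v) = (b - a) - (G.degree v - 1) := by
        unfold setDef
        rw [hb, ha, card_vSpectrum hc v]
        rfl
      rw [hsd]
      omega
    calc Bad.card ≤ _ := Finset.card_le_card hsub
      _ ≤ ∑ v, (G.edgeFinset.filter
          (fun e => v ∈ e ∧ ∃ e' ∈ G.edgeFinset, v ∈ e' ∧ c e' % Δ = c e % Δ ∧ c e' < c e)).card :=
        Finset.card_biUnion_le
      _ ≤ ∑ v, setDef (vSpectrum G c v) := Finset.sum_le_sum (fun v _ => hstep v)
      _ = colDef G c := rfl
  -- Step B : good edges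
  set Good := G.edgeFinset \ Bad with hGood
  have hGoodBad : Good.card + Bad.card = G.edgeFinset.card :=
    Finset.card_sdiff_add_card_eq_card hBadsub
  have hfiber : Good.card = ∑ r ∈ Finset.range Δ, (Good.filter (fun e => c e % Δ = r)).card :=
    Finset.card_eq_sum_card_fiberwise (fun e _ => Finset.mem_range.mpr (Nat.mod_lt _ hΔ))
  have hGr : ∀ r ∈ Finset.range Δ, 2 * (Good.filter (fun e => c e % Δ = r)).card + 1 ≤ n := by
    intro r _
    apply matching_bound hodd
    · intro e he
      rw [Finset.mem_filter, hGood, Finset.mem_sdiff] at he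
      exact he.1.1
    · intro e he e' he' hne v hv
      rw [Finset.mem_filter, hGood, Finset.mem_sdiff] at he he'
      obtain ⟨⟨heE, heB⟩, her⟩ := he
      obtain ⟨⟨he'E, he'B⟩, he'r⟩ := he'
      have hcc : c e ≠ c e' :=
        hc e (SimpleGraph.mem_edgeFinset.mp heE) e' (SimpleGraph.mem_edgeFinset.mp he'E) hne
          ⟨v, hv.1, hv.2⟩
      rcases Nat.lt_or_ge (c e) (c e') with hlt | hge
      · refine he'B ?_
        rw [hBaddef, Finset.mem_filter]
        exact ⟨he'E, v, hv.2, e, heE, hv.1, by omega, hlt⟩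
      · refine heB ?_
        rw [hBaddef, Finset.mem_filter]
        exact ⟨heE, v, hv.1, e', he'E, hv.2, by omega, by omega⟩
  have hGoodcard : 2 * Good.card ≤ (n - 1) * Δ := by
    calc 2 * Good.card
        = ∑ r ∈ Finset.range Δ, 2 * (Good.filter (fun e => c e % Δ = r)).card := by
          rw [hfiber, Finset.mul_sum]
      _ ≤ ∑ _r ∈ Finset.range Δ, (n - 1) :=
          Finset.sum_le_sum (fun r hr => by have := hGr r hr; omega)
      _ = Δ * (n - 1) := by rw [Finset.sum_const, Finset.card_range, smul_eq_mul]
      _ = (n - 1) * Δ := mul_comm _ _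
  omega

end DefAux

theorem stmt_15 {V : Type*} [Fintype V] (G : SimpleGraph V)
    (hodd : Odd (Fintype.card V)) :
    2 * (G.edgeFinset.card : ℤ) - ((Fintype.card V : ℤ) - 1) * G.maxDegree
      ≤ 2 * (graphDef G : ℤ) := by
  classical
  have hne : {d | ∃ c, IsProperEdgeColoring G c ∧ colDef G c = d}.Nonempty := by
    obtain ⟨f, hf⟩ := exists_injective_nat (Sym2 V)
    exact ⟨_, f, fun e _ e' _ hne _ h => hne (hf h), rfl⟩
  obtain ⟨c, hc, hcd⟩ := Nat.sInf_mem hne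
  have key := key_ineq hodd c hc
  rw [hcd] at key
  have hn : 1 ≤ Fintype.card V := by
    rcases hodd with ⟨k, hk⟩; omega
  have key' := (Nat.cast_le (α := ℤ)).mpr key
  push_cast [Nat.cast_sub hn] at key'
  unfold graphDef
  linarith
end
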